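/- Let W be a vector space with transversal lagrangian subspaces L_W, C_W ⊆ W ⊕ W*, let J : V → W be linear, let L ⊆ V ⊕ V* be lagrangian making J a strong Dirac map onto (W, L_W), and let C ⊆ V ⊕ V* be the backward image of C_W under J. Then C is a lagrangian subspace transversal to L: V ⊕ V* = L ⊕ C. -/

import Mathlib

/-- The backward image of `C_W` under `J`. -/
def backwardImage {V W : Type*} [AddCommGroup V] [Module ℝ V] [AddCommGroup W] [Module ℝ W]
    (J : V →ₗ[ℝ] W) (CW : Submodule ℝ (W × Module.Dual ℝ W)) :
    Set (V × Module.Dual ℝ V) :=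
  {p | ∃ (X : V) (β : Module.Dual ℝ W), p = (X, J.dualMap β) ∧ (J X, β) ∈ CW}

/-- The canonical symmetric pairing on `V ⊕ V*`. -/
noncomputable def pairForm (V : Type*) [AddCommGroup V] [Module ℝ V] :
    LinearMap.BilinForm ℝ (V × Module.Dual ℝ V) :=
  LinearMap.mk₂ ℝ (fun p q => q.2 p.1 + p.2 q.1)
    (by intro p p' q; simp only [Prod.fst_add, Prod.snd_add, map_add, LinearMap.add_apply]; ring)
    (by intro a p q; simp only [Prod.smul_fst, Prod.smul_snd, map_smul, LinearMap.smul_apply,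
          smul_eq_mul]; ring)
    (by intro p q q'; simp only [Prod.fst_add, Prod.snd_add, map_add, LinearMap.add_apply]; ring)
    (by intro a p q; simp only [Prod.smul_fst, Prod.smul_snd, map_smul, LinearMap.smul_apply,
          smul_eq_mul]; ring)

theorem pairForm_apply {V : Type*} [AddCommGroup V] [Module ℝ V]
    (p q : V × Module.Dual ℝ V) : pairForm V p q = q.2 p.1 + p.2 q.1 := rfl

theorem pairForm_isRefl (V : Type*) [AddCommGroup V] [Module ℝ V] :
    (pairForm V).IsRefl := by
  intro p q h
  rw [pairForm_apply] at h ⊢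
  linarith

theorem pairForm_nondegenerate (V : Type*) [AddCommGroup V] [Module ℝ V]
    [FiniteDimensional ℝ V] : (pairForm V).Nondegenerate := by
  refine (LinearMap.IsRefl.nondegenerate_iff_separatingLeft (pairForm_isRefl V)).mpr ?_
  intro p h
  have h2 : p.2 = 0 := by
    ext v
    have := h (v, 0)
    rw [pairForm_apply] at this
    simpa using this
  have h1 : p.1 = 0 := by
    rw [← Module.forall_dual_apply_eq_zero_iff ℝ p.1]
    intro φ
    have := h (0, φ)
    rw [pairForm_apply] at this
    simpa using this
  exact Prod.ext h1 h2

theorem sup_eq_top_of_orthogonal_eq_bot {E : Type*} [AddCommGroup E] [Module ℝ E]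
    [FiniteDimensional ℝ E] {B : LinearMap.BilinForm ℝ E} (hr : B.IsRefl)
    (hnd : B.Nondegenerate) {U : Submodule ℝ E} (h : B.orthogonal U = ⊥) : U = ⊤ := by
  have h2 := LinearMap.BilinForm.orthogonal_orthogonal hnd hr U
  rw [h] at h2
  rw [← h2]
  ext x
  simp only [LinearMap.BilinForm.mem_orthogonal_iff, Submodule.mem_bot, Submodule.mem_top,
    iff_true]
  rintro n rfl
  simp [LinearMap.BilinForm.IsOrtho]

/-- If `J` is a strong Dirac map onto `(W, L_W)` and `C_W` is a
lagrangian complement to `L_W`, then the backward image `C` of `C_W` is a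
lagrangian subspace transversal to `L`: `V ⊕ V* = L ⊕ C`. -/
theorem backward_image_transversal {V W : Type*}
    [AddCommGroup V] [Module ℝ V] [FiniteDimensional ℝ V]
    [AddCommGroup W] [Module ℝ W] [FiniteDimensional ℝ W]
    (J : V →ₗ[ℝ] W)
    (L : Submodule ℝ (V × Module.Dual ℝ V))
    (LW CW : Submodule ℝ (W × Module.Dual ℝ W))
    (hL : ∀ x : V × Module.Dual ℝ V, x ∈ L ↔ ∀ y ∈ L, y.2 x.1 + x.2 y.1 = 0)
    (hLW : ∀ x : W × Module.Dual ℝ W, x ∈ LW ↔ ∀ y ∈ LW, y.2 x.1 + x.2 y.1 = 0)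
    (hCW : ∀ x : W × Module.Dual ℝ W, x ∈ CW ↔ ∀ y ∈ CW, y.2 x.1 + x.2 y.1 = 0)
    (htrans : LW ⊓ CW = ⊥)
    (hfwd : ∀ q : W × Module.Dual ℝ W,
        q ∈ LW ↔ ∃ (X : V) (β : Module.Dual ℝ W), q = (J X, β) ∧ (X, J.dualMap β) ∈ L)
    (hker : ∀ X : V, J X = 0 → (X, (0 : Module.Dual ℝ V)) ∈ L → X = 0) :
    (∀ p : V × Module.Dual ℝ V,
        p ∈ backwardImage J CW ↔ ∀ q ∈ backwardImage J CW, q.2 p.1 + p.2 q.1 = 0) ∧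
    (∀ p ∈ backwardImage J CW, p ∈ L → p = 0) ∧
    (∀ p : V × Module.Dual ℝ V, ∃ l ∈ L, ∃ c ∈ backwardImage J CW, p = l + c) := by
  classical
  -- `C` as a submodule
  let C : Submodule ℝ (V × Module.Dual ℝ V) :=
    { carrier := backwardImage J CW
      add_mem' := by
        rintro _ _ ⟨X1, β1, rfl, h1⟩ ⟨X2, β2, rfl, h2⟩
        exact ⟨X1 + X2, β1 + β2, by simp [Prod.ext_iff],
          by simpa [map_add, Prod.mk_add_mk] using CW.add_mem h1 h2⟩
      zero_mem' := ⟨0, 0, by simp [Prod.ext_iff], by rw [map_zero]; exact CW.zero_mem⟩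
      smul_mem' := by
        rintro a _ ⟨X, β, rfl, h⟩
        exact ⟨a • X, a • β, by simp [Prod.ext_iff],
          by simpa [map_smul, Prod.smul_mk] using CW.smul_mem a h⟩ }
  have hmemC : ∀ p : V × Module.Dual ℝ V, p ∈ backwardImage J CW ↔ p ∈ C := fun p => Iff.rfl
  -- isotropy of `C`
  have hCiso : ∀ p ∈ backwardImage J CW, ∀ q ∈ backwardImage J CW,
      q.2 p.1 + p.2 q.1 = 0 := by
    rintro _ ⟨X, β, rfl, hX⟩ _ ⟨Y, γ, rfl, hY⟩
    have := (hCW (J X, β)).mp hX (J Y, γ) hY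
    simpa [LinearMap.dualMap_apply] using this
  -- `LW ⊔ CW = ⊤`
  have hWsup : LW ⊔ CW = ⊤ := by
    apply sup_eq_top_of_orthogonal_eq_bot (pairForm_isRefl W) (pairForm_nondegenerate W)
    rw [eq_bot_iff]
    intro r hr
    rw [LinearMap.BilinForm.mem_orthogonal_iff] at hr
    have h1 : r ∈ LW := (hLW r).mpr fun y hy => by
      have := hr y (Submodule.mem_sup_left hy)
      rw [pairForm_apply] at this
      linarith
    have h2 : r ∈ CW := (hCW r).mpr fun y hy => by
      have := hr y (Submodule.mem_sup_right hy)
      rw [pairForm_apply] at this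
      linarith
    have : r ∈ LW ⊓ CW := ⟨h1, h2⟩
    rwa [htrans] at this
  -- decomposition in `W ⊕ W*`
  have decompW : ∀ q : W × Module.Dual ℝ W, ∃ u : V, ∃ δ : Module.Dual ℝ W,
      (u, J.dualMap δ) ∈ L ∧ ∃ Z : W, ∃ β : Module.Dual ℝ W,
      (Z, β) ∈ CW ∧ q = (J u, δ) + (Z, β) := by
    intro q
    have hq : q ∈ LW ⊔ CW := by rw [hWsup]; trivial
    obtain ⟨lw, hlw, cw, hcw, hsum⟩ := Submodule.mem_sup.mp hq
    obtain ⟨u, δ, rfl, huL⟩ := (hfwd lw).mp hlw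
    exact ⟨u, δ, huL, cw.1, cw.2, hcw, by rw [← hsum]⟩
  -- key: an element of `L` orthogonal to `C` is zero
  have hkey : ∀ p : V × Module.Dual ℝ V, p ∈ L →
      (∀ q ∈ backwardImage J CW, q.2 p.1 + p.2 q.1 = 0) → p = 0 := by
    rintro ⟨x, ξ⟩ hpL hpC
    have stepa : ∀ γ : Module.Dual ℝ W, γ (J x) + ξ x = 0 := by
      intro γ
      obtain ⟨u, δ, huL, Z, β, hZCW, hq⟩ := decompW (J x, γ)
      have hx1 : J x = J u + Z := congrArg Prod.fst hq
      have hx2 : γ = δ + β := congrArg Prod.snd hq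
      have hZ' : Z = J (x - u) := by rw [map_sub, hx1]; abel
      have hc : ((x - u, J.dualMap β) : V × Module.Dual ℝ V) ∈ backwardImage J CW :=
        ⟨x - u, β, rfl, by rwa [← hZ']⟩
      have h1 := hpC _ hc
      have h2 := (hL (x, ξ)).mp hpL (u, J.dualMap δ) huL
      simp only [LinearMap.dualMap_apply, map_sub] at h1 h2
      rw [hx2]
      simp only [LinearMap.add_apply]
      linarith
    have hxx : ξ x = 0 := by simpa using stepa 0
    have hJx : J x = 0 := by
      rw [← Module.forall_dual_apply_eq_zero_iff ℝ (J x)]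
      intro γ
      have := stepa γ
      linarith
    have hxi : ξ = 0 := by
      ext v
      obtain ⟨u, δ, huL, Z, β, hZCW, hq⟩ := decompW (J v, 0)
      have hx1 : J v = J u + Z := congrArg Prod.fst hq
      have hZ' : Z = J (v - u) := by rw [map_sub, hx1]; abel
      have hc : ((v - u, J.dualMap β) : V × Module.Dual ℝ V) ∈ backwardImage J CW :=
        ⟨v - u, β, rfl, by rwa [← hZ']⟩
      have h1 := hpC _ hc
      have h2 := (hL (x, ξ)).mp hpL (u, J.dualMap δ) huL
      simp only [LinearMap.dualMap_apply, map_sub, hJx, map_zero] at h1 h2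
      simp only [LinearMap.zero_apply]
      linarith
    rw [hxi] at hpL ⊢
    have hx0 : x = 0 := hker x hJx hpL
    rw [hx0]
    rfl
  -- `L ⊔ C = ⊤`
  have hsup : L ⊔ C = ⊤ := by
    apply sup_eq_top_of_orthogonal_eq_bot (pairForm_isRefl V) (pairForm_nondegenerate V)
    rw [eq_bot_iff]
    intro r hr
    rw [LinearMap.BilinForm.mem_orthogonal_iff] at hr
    have hrL : r ∈ L := (hL r).mpr fun y hy => by
      have := hr y (Submodule.mem_sup_left hy)
      rw [pairForm_apply] at this
      linarith
    have hrC : ∀ q ∈ backwardImage J CW, q.2 r.1 + r.2 q.1 = 0 := fun q hq => by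
      have := hr q (Submodule.mem_sup_right ((hmemC q).mp hq))
      rw [pairForm_apply] at this
      linarith
    simp [hkey r hrL hrC]
  have hdecomp : ∀ p : V × Module.Dual ℝ V,
      ∃ l ∈ L, ∃ c ∈ backwardImage J CW, p = l + c := by
    intro p
    have hp : p ∈ L ⊔ C := by rw [hsup]; trivial
    obtain ⟨l, hl, c, hc, hlc⟩ := Submodule.mem_sup.mp hp
    exact ⟨l, hl, c, (hmemC c).mpr hc, hlc.symm⟩
  refine ⟨?_, ?_, hdecomp⟩
  · intro p
    constructor
    · intro hp q hq
      exact hCiso p hp q hq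
    · intro hp
      obtain ⟨l, hl, c, hc, rfl⟩ := hdecomp p
      have hlC : ∀ q ∈ backwardImage J CW, q.2 l.1 + l.2 q.1 = 0 := by
        intro q hq
        have h1 := hp q hq
        have h2 := hCiso c hc q hq
        simp only [Prod.fst_add, Prod.snd_add, map_add, LinearMap.add_apply] at h1
        linarith
      rw [hkey l hl hlC, zero_add]
      exact hc
  · rintro p ⟨X, β, rfl, hXβ⟩ hpL
    have hmem : (J X, β) ∈ LW := (hfwd _).mpr ⟨X, β, rfl, hpL⟩
    have hb : (J X, β) ∈ LW ⊓ CW := ⟨hmem, hXβ⟩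
    rw [htrans, Submodule.mem_bot] at hb
    have hJX : J X = 0 := congrArg Prod.fst hb
    have hβ : β = 0 := congrArg Prod.snd hb
    have hX0 : X = 0 := hker X hJX (by simpa [hβ] using hpL)
    simp [hX0, hβ]
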